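/- Let P be a vertex-selection-gadget profile (as in the context, with parameter n' ≥ 1 and index arithmetic modulo 2n'+1). Call an agent a blocking agent of a matching M if it belongs to some pair blocking M. Then for every matching M of P: (1) there is an index i ∈ {0,…,2n'} such that a^{i−1} and a^i are both blocking agents of M, so M has at least two blocking agents; and (2) if M(a^i) ≠ u^i for every i ∈ {0,…,2n'}, then M has at least three blocking agents. -/

import Mathlib

namespace StableRoommates

/-- A preference profile: each agent `i` has a finite set `acc i` of acceptable agents
(not containing `i` itself) and a weak order `pref i` (complete and transitive) on `acc i`;
`pref i x y` means `x ⪰_i y`. -/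
structure Profile (V : Type*) [DecidableEq V] [Fintype V] where
  acc : V → Finset V
  not_self : ∀ i, i ∉ acc i
  pref : V → V → V → Prop
  pref_total : ∀ i, ∀ x ∈ acc i, ∀ y ∈ acc i, pref i x y ∨ pref i y x
  pref_trans : ∀ i x y z, pref i x y → pref i y z → pref i x z

namespace Profile

variable {V : Type*} [DecidableEq V] [Fintype V]

/-- Strict preference `x ≻_i y`. -/
def SPref (P : Profile V) (i x y : V) : Prop := P.pref i x y ∧ ¬ P.pref i y x

/-- Tie `x ∼_i y`. -/
def Tie (P : Profile V) (i x y : V) : Prop := P.pref i x y ∧ P.pref i y x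

/-- `x` and `y` are mutually acceptable. -/
def MutAcc (P : Profile V) (x y : V) : Prop := y ∈ P.acc x ∧ x ∈ P.acc y

/-- `rank_i(y) = |{z ∈ V_i : z ≻_i y}|`. -/
noncomputable def rank (P : Profile V) (i y : V) : ℕ :=
  {z : V | z ∈ P.acc i ∧ P.SPref i z y}.ncard

/-- A matching, encoded as a symmetric partial partner function: `M x = some y`
means the pair `{x, y}` belongs to the matching, `M x = none` means `x` is unmatched. -/
structure IsMatching (P : Profile V) (M : V → Option V) : Prop where
  symm : ∀ x y, M x = some y → M y = some x
  mutacc : ∀ x y, M x = some y → P.MutAcc x y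

/-- The mutually acceptable pair `{x,y} ∉ M` blocks `M`. -/
def Blocks (P : Profile V) (M : V → Option V) (x y : V) : Prop :=
  P.MutAcc x y ∧ M x ≠ some y ∧
    (∀ z, M x = some z → P.SPref x y z) ∧
    (∀ z, M y = some z → P.SPref y x z)

/-- A matching is stable if no pair blocks it. -/
def Stable (P : Profile V) (M : V → Option V) : Prop :=
  ∀ x y, ¬ P.Blocks M x y

/-- The contribution of agent `i` to the egalitarian cost: `rank_i(M(i))`,
with `rank_i(⊥) = |V_i|`. -/
noncomputable def agentCost (P : Profile V) (M : V → Option V) (i : V) : ℕ :=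
  match M i with
  | none => (P.acc i).card
  | some y => P.rank i y

/-- The egalitarian cost `γ(M) = Σ_{i ∈ V} rank_i(M(i))`. -/
noncomputable def egalCost (P : Profile V) (M : V → Option V) : ℕ :=
  ∑ i, P.agentCost M i

/-- Two disjoint mutually acceptable pairs `{u,v}` and `{u',v'}` block each other
via `{u,u'}`. -/
def BlockVia (P : Profile V) (u v u' v' : V) : Prop :=
  P.MutAcc u v ∧ P.MutAcc u' v' ∧
    u ≠ u' ∧ u ≠ v' ∧ v ≠ u' ∧ v ≠ v' ∧
    P.MutAcc u u' ∧ P.SPref u u' v ∧ P.SPref u' u v'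

/-- The pair `{u,v}` is critical for `u` (w.r.t. threshold `γ`) if
`|{x ∈ V_u \ {v} : x ⪰_u v}| > γ`. -/
def CriticalFor (P : Profile V) (γ : ℕ) (u v : V) : Prop :=
  γ < {x : V | x ∈ P.acc u ∧ x ≠ v ∧ P.pref u x v}.ncard

/-- The pair `{u,v}` is harmless for `u` (w.r.t. threshold `γ`). -/
def HarmlessFor (P : Profile V) (γ : ℕ) (u v : V) : Prop := ¬ P.CriticalFor γ u v

/-- `u'` is a culprit of the matching `M`: some pair `{u,v} ∈ M` and some
mutually acceptable pair `{u',v'} ∉ M`, disjoint from it, block each other via `{u,u'}`. -/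
def Culprit (P : Profile V) (M : V → Option V) (u' : V) : Prop :=
  ∃ u v v', M u = some v ∧ M u' ≠ some v' ∧ P.BlockVia u v u' v'

end Profile

end StableRoommates

open StableRoommates Profile

/-- A vertex-selection-gadget profile with parameter `n'`: the agent set contains
pairwise disjoint families `a`, `u`, `c`, `d` indexed modulo `2n'+1`, with the
prescribed acceptability sets and strict preferences; the preferences of the
agents `u i` and of any further agents are arbitrary. -/
structure SelGadget (V : Type*) [DecidableEq V] [Fintype V] (P : Profile V) (n' : ℕ) where
  a : ZMod (2 * n' + 1) → V
  u : ZMod (2 * n' + 1) → V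
  c : ZMod (2 * n' + 1) → V
  d : ZMod (2 * n' + 1) → V
  inj : Function.Injective (fun p : ZMod (2 * n' + 1) × Fin 4 => ![a, u, c, d] p.2 p.1)
  acc_a : ∀ i, P.acc (a i) = {a (i + 1), a (i - 1), u i, c i, d i}
  pref_a1 : ∀ i, P.SPref (a i) (a (i + 1)) (a (i - 1))
  pref_a2 : ∀ i, P.SPref (a i) (a (i - 1)) (u i)
  pref_a3 : ∀ i, P.SPref (a i) (u i) (c i)
  pref_a4 : ∀ i, P.SPref (a i) (c i) (d i)
  acc_c : ∀ i, P.acc (c i) = {d i, a i}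
  pref_c : ∀ i, P.SPref (c i) (d i) (a i)
  acc_d : ∀ i, P.acc (d i) = {a i, c i}
  pref_d : ∀ i, P.SPref (d i) (a i) (c i)

/-- An agent is a blocking agent of `M` if it belongs to some pair blocking `M`. -/
def IsBlockingAgent {V : Type*} [DecidableEq V] [Fintype V] (P : Profile V)
    (M : V → Option V) (x : V) : Prop :=
  ∃ y, P.Blocks M x y ∨ P.Blocks M y x


section GadgetHelpers

variable {V : Type*} [DecidableEq V] [Fintype V]

private lemma spref_trans' (P : Profile V) {i x y z : V}
    (h1 : P.SPref i x y) (h2 : P.SPref i y z) : P.SPref i x z :=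
  ⟨P.pref_trans i x y z h1.1 h2.1, fun h => h2.2 (P.pref_trans i z x y h h1.1)⟩

private lemma no_alternation (n : ℕ) (g : ZMod (2*n+1) → Bool)
    (h : ∀ i, g (i+1) = ! g i) : False := by
  have key : ∀ k : ℕ, g ((2*k : ℕ) : ZMod (2*n+1)) = g 0 := by
    intro k
    induction k with
    | zero => simp
    | succ k ih =>
      have e : ((2*(k+1) : ℕ) : ZMod (2*n+1)) = ((2*k : ℕ) : ZMod (2*n+1)) + 1 + 1 := by
        push_cast; ring
      rw [e, h, h, Bool.not_not, ih]
  have h1 : ((2*(n+1) : ℕ) : ZMod (2*n+1)) = 1 := by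
    have e : (2*(n+1) : ℕ) = (2*n+1) + 1 := by ring
    rw [e, Nat.cast_add, ZMod.natCast_self, Nat.cast_one, zero_add]
  have h2 := key (n+1)
  rw [h1] at h2
  have h3 := h 0
  rw [zero_add] at h3
  rw [h3] at h2
  exact Bool.not_ne_self (g 0) h2

end GadgetHelpers

theorem stmt_15 {V : Type*} [DecidableEq V] [Fintype V] (P : Profile V)
    (n' : ℕ) (hn' : 1 ≤ n') (G : SelGadget V P n')
    (M : V → Option V) (hM : P.IsMatching M) :
    (∃ i : ZMod (2 * n' + 1),
      IsBlockingAgent P M (G.a (i - 1)) ∧ IsBlockingAgent P M (G.a i)) ∧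
    2 ≤ {x : V | IsBlockingAgent P M x}.ncard ∧
    ((∀ i : ZMod (2 * n' + 1), M (G.a i) ≠ some (G.u i)) →
      3 ≤ {x : V | IsBlockingAgent P M x}.ncard) := by
  classical
  -- injectivity facts
  have inj2 : ∀ (i k : ZMod (2*n'+1)) (s t : Fin 4),
      ![G.a, G.u, G.c, G.d] s i = ![G.a, G.u, G.c, G.d] t k → i = k ∧ s = t := by
    intro i k s t h
    have h2 := G.inj (a₁ := (i, s)) (a₂ := (k, t)) h
    exact ⟨congrArg Prod.fst h2, congrArg Prod.snd h2⟩
  have ha : ∀ {i k : ZMod (2*n'+1)}, G.a i = G.a k → i = k :=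
    fun {i k} h => (inj2 i k 0 0 h).1
  have hau : ∀ i k : ZMod (2*n'+1), G.a i ≠ G.u k :=
    fun i k h => absurd (inj2 i k 0 1 h).2 (by decide)
  have hac : ∀ i k : ZMod (2*n'+1), G.a i ≠ G.c k :=
    fun i k h => absurd (inj2 i k 0 2 h).2 (by decide)
  have had : ∀ i k : ZMod (2*n'+1), G.a i ≠ G.d k :=
    fun i k h => absurd (inj2 i k 0 3 h).2 (by decide)
  have hcd : ∀ i k : ZMod (2*n'+1), G.c i ≠ G.d k :=
    fun i k h => absurd (inj2 i k 2 3 h).2 (by decide)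
  -- numeric facts
  have hdvd : ∀ k : ℕ, 0 < k → k < 2*n'+1 → ((k : ZMod (2*n'+1)) ≠ 0) := by
    intro k hk hk2 h
    rw [ZMod.natCast_eq_zero_iff] at h
    have := Nat.le_of_dvd hk h
    omega
  have h1ne : (1 : ZMod (2*n'+1)) ≠ 0 := by
    have := hdvd 1 (by norm_num) (by omega); simpa using this
  have h2ne : (1 + 1 : ZMod (2*n'+1)) ≠ 0 := by
    have := hdvd 2 (by norm_num) (by omega)
    rw [Nat.cast_ofNat] at this
    rw [one_add_one_eq_two]
    exact this
  -- preference helpers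
  have hbest : ∀ (i : ZMod (2*n'+1)) (z : V), z ∈ P.acc (G.a i) → z ≠ G.a (i+1) →
      P.SPref (G.a i) (G.a (i+1)) z := by
    intro i z hz hne
    rw [G.acc_a] at hz
    simp only [Finset.mem_insert, Finset.mem_singleton] at hz
    rcases hz with h|h|h|h|h
    · exact absurd h hne
    · rw [h]; exact G.pref_a1 i
    · rw [h]; exact spref_trans' P (G.pref_a1 i) (G.pref_a2 i)
    · rw [h]
      exact spref_trans' P (spref_trans' P (G.pref_a1 i) (G.pref_a2 i)) (G.pref_a3 i)
    · rw [h]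
      exact spref_trans' P (spref_trans' P (spref_trans' P (G.pref_a1 i) (G.pref_a2 i))
        (G.pref_a3 i)) (G.pref_a4 i)
  have hsecond : ∀ (i : ZMod (2*n'+1)) (z : V), z ∈ P.acc (G.a i) → z ≠ G.a (i+1) →
      z ≠ G.a (i-1) → P.SPref (G.a i) (G.a (i-1)) z := by
    intro i z hz hne1 hne2
    rw [G.acc_a] at hz
    simp only [Finset.mem_insert, Finset.mem_singleton] at hz
    rcases hz with h|h|h|h|h
    · exact absurd h hne1
    · exact absurd h hne2
    · rw [h]; exact G.pref_a2 i
    · rw [h]; exact spref_trans' P (G.pref_a2 i) (G.pref_a3 i)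
    · rw [h]; exact spref_trans' P (spref_trans' P (G.pref_a2 i) (G.pref_a3 i)) (G.pref_a4 i)
  have hmaa : ∀ i : ZMod (2*n'+1), P.MutAcc (G.a i) (G.a (i+1)) := by
    intro i
    constructor
    · rw [G.acc_a]; simp
    · rw [G.acc_a]
      have e : i + 1 - 1 = i := by ring
      rw [e]
      simp
  -- the main existence of an index
  have main : ∃ i : ZMod (2*n'+1),
      M (G.a i) ≠ some (G.a (i+1)) ∧ M (G.a (i+1)) ≠ some (G.a (i+1+1)) := by
    by_contra hcon
    push_neg at hcon
    apply no_alternation n' (fun i => decide (M (G.a i) = some (G.a (i+1))))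
    intro i
    by_cases h : M (G.a i) = some (G.a (i+1))
    · have hs := hM.symm _ _ h
      have hne : ¬ (M (G.a (i+1)) = some (G.a (i+1+1))) := by
        rw [hs]
        intro he
        have h2 : i = i + 1 + 1 := ha (Option.some.inj he)
        rw [add_assoc] at h2
        exact h2ne (left_eq_add.mp h2)
      simp [h, hne]
    · have h2 := hcon i h
      simp [h, h2]
  obtain ⟨i0, hi1, hi2⟩ := main
  have hsym0 : M (G.a (i0+1)) ≠ some (G.a i0) := fun h => hi1 (hM.symm _ _ h)
  have e : i0 + 1 - 1 = i0 := by ring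
  have hblock : P.Blocks M (G.a i0) (G.a (i0+1)) := by
    refine ⟨hmaa i0, hi1, ?_, ?_⟩
    · intro z hz
      exact hbest i0 z (hM.mutacc _ _ hz).1 (fun he => hi1 (he ▸ hz))
    · intro z hz
      have hz1 : z ∈ P.acc (G.a (i0+1)) := (hM.mutacc _ _ hz).1
      have h2 := hsecond (i0+1) z hz1 (fun he => hi2 (he ▸ hz))
        (by rw [e]; exact fun he => hsym0 (he ▸ hz))
      rw [e] at h2
      exact h2
  have hba1 : IsBlockingAgent P M (G.a i0) := ⟨G.a (i0+1), Or.inl hblock⟩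
  have hba2 : IsBlockingAgent P M (G.a (i0+1)) := ⟨G.a i0, Or.inr hblock⟩
  have hne1 : G.a i0 ≠ G.a (i0+1) := by
    intro h
    exact h1ne (left_eq_add.mp (ha h))
  refine ⟨⟨i0 + 1, ?_, hba2⟩, ?_, ?_⟩
  · rw [e]; exact hba1
  · have hsub : ({G.a i0, G.a (i0+1)} : Set V) ⊆ {x | IsBlockingAgent P M x} := by
      intro x hx
      simp only [Set.mem_insert_iff, Set.mem_singleton_iff] at hx
      rcases hx with rfl | rfl
      · exact hba1
      · exact hba2
    calc (2:ℕ) = ({G.a i0, G.a (i0+1)} : Set V).ncard := (Set.ncard_pair hne1).symm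
    _ ≤ _ := Set.ncard_le_ncard hsub (Set.toFinite _)
  · intro hu
    have hthird : ∃ w, (w = G.c (i0+1) ∨ w = G.d (i0+1)) ∧ IsBlockingAgent P M w := by
      cases hMv : M (G.a (i0+1)) with
      | none =>
        refine ⟨G.d (i0+1), Or.inr rfl, G.a (i0+1), Or.inr ⟨?_, ?_, ?_, ?_⟩⟩
        · constructor
          · rw [G.acc_a]; simp
          · rw [G.acc_d]; simp
        · rw [hMv]; simp
        · intro z hz; rw [hMv] at hz; exact nomatch hz
        · intro z hz
          have hz1 : z ∈ P.acc (G.d (i0+1)) := (hM.mutacc _ _ hz).1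
          rw [G.acc_d] at hz1
          simp only [Finset.mem_insert, Finset.mem_singleton] at hz1
          rcases hz1 with h|h
          · exfalso
            rw [h] at hz
            have h2 := hM.symm _ _ hz
            rw [hMv] at h2
            exact nomatch h2
          · rw [h]; exact G.pref_d (i0+1)
      | some z =>
        have hz1 : z ∈ P.acc (G.a (i0+1)) := (hM.mutacc _ _ hMv).1
        rw [G.acc_a] at hz1
        simp only [Finset.mem_insert, Finset.mem_singleton] at hz1
        rcases hz1 with h|h|h|h|h
        · exact absurd (h ▸ hMv) hi2
        · rw [e] at h; exact absurd (h ▸ hMv) hsym0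
        · exact absurd (h ▸ hMv) (hu (i0+1))
        · -- matched to c : pair {c,d} blocks
          subst h
          have hcj : M (G.c (i0+1)) = some (G.a (i0+1)) := hM.symm _ _ hMv
          refine ⟨G.d (i0+1), Or.inr rfl, G.c (i0+1), Or.inr ⟨?_, ?_, ?_, ?_⟩⟩
          · constructor
            · rw [G.acc_c]; simp
            · rw [G.acc_d]; simp
          · rw [hcj]
            intro hh
            exact had (i0+1) (i0+1) (Option.some.inj hh)
          · intro w hw
            rw [hcj] at hw
            have hw2 : w = G.a (i0+1) := (Option.some.inj hw).symm
            rw [hw2]; exact G.pref_c (i0+1)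
          · intro w hw
            exfalso
            have hw1 : w ∈ P.acc (G.d (i0+1)) := (hM.mutacc _ _ hw).1
            rw [G.acc_d] at hw1
            simp only [Finset.mem_insert, Finset.mem_singleton] at hw1
            rcases hw1 with h|h
            · rw [h] at hw
              have h2 := hM.symm _ _ hw
              rw [hMv] at h2
              exact hcd _ _ (Option.some.inj h2)
            · rw [h] at hw
              have h2 := hM.symm _ _ hw
              rw [hcj] at h2
              exact had _ _ (Option.some.inj h2)
        · -- matched to d : pair {a,c} blocks
          subst h
          have hdj : M (G.d (i0+1)) = some (G.a (i0+1)) := hM.symm _ _ hMv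
          refine ⟨G.c (i0+1), Or.inl rfl, G.a (i0+1), Or.inr ⟨?_, ?_, ?_, ?_⟩⟩
          · constructor
            · rw [G.acc_a]; simp
            · rw [G.acc_c]; simp
          · rw [hMv]
            intro hh
            exact hcd (i0+1) (i0+1) (Option.some.inj hh).symm
          · intro w hw
            rw [hMv] at hw
            have hw2 : w = G.d (i0+1) := (Option.some.inj hw).symm
            rw [hw2]; exact G.pref_a4 (i0+1)
          · intro w hw
            exfalso
            have hw1 : w ∈ P.acc (G.c (i0+1)) := (hM.mutacc _ _ hw).1
            rw [G.acc_c] at hw1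
            simp only [Finset.mem_insert, Finset.mem_singleton] at hw1
            rcases hw1 with h|h
            · rw [h] at hw
              have h2 := hM.symm _ _ hw
              rw [hdj] at h2
              exact hac _ _ (Option.some.inj h2)
            · rw [h] at hw
              have h2 := hM.symm _ _ hw
              rw [hMv] at h2
              exact hcd _ _ (Option.some.inj h2).symm
    obtain ⟨w, hw_or, hw_ba⟩ := hthird
    have hne2 : G.a i0 ≠ w := by
      rcases hw_or with rfl | rfl
      · exact hac _ _
      · exact had _ _
    have hne3 : G.a (i0+1) ≠ w := by
      rcases hw_or with rfl | rfl
      · exact hac _ _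
      · exact had _ _
    have hsub : ({G.a i0, G.a (i0+1), w} : Set V) ⊆ {x | IsBlockingAgent P M x} := by
      intro x hx
      simp only [Set.mem_insert_iff, Set.mem_singleton_iff] at hx
      rcases hx with rfl | rfl | rfl
      · exact hba1
      · exact hba2
      · exact hw_ba
    have hcard : ({G.a i0, G.a (i0+1), w} : Set V).ncard = 3 :=
      Set.ncard_eq_three.mpr ⟨_, _, _, hne1, hne2, hne3, rfl⟩
    calc (3:ℕ) = ({G.a i0, G.a (i0+1), w} : Set V).ncard := hcard.symm
    _ ≤ _ := Set.ncard_le_ncard hsub (Set.toFinite _)
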